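/- Every biconnected outerplanar graph on at least 3 vertices is Hamiltonian; indeed, the boundary of the outer face forms a Hamiltonian cycle. -/

import Mathlib

/-- Strict cyclic betweenness on `Fin n`: `b` lies strictly between `a` and `c`
going clockwise from `a` to `c`. -/
def cycBtw {n : ℕ} (a b c : Fin n) : Prop :=
  (a < b ∧ b < c) ∨ (b < c ∧ c < a) ∨ (c < a ∧ a < b)

/-- The pair of non-adjacent edges `uv` and `xy` is separated in the circular ordering `σ`
(the ordering places vertex `w` at circular position `σ w`): the endpoints `x` and `y` lie
in the same arc determined by `u` and `v`, i.e. the endpoints do not alternate. -/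
def cSeparates {V : Type*} {n : ℕ} (σ : V ≃ Fin n) (u v x y : V) : Prop :=
  cycBtw (σ u) (σ x) (σ v) ↔ cycBtw (σ u) (σ y) (σ v)

/-- The chords `uv` and `xy` cross (their endpoints alternate) in the circular ordering `σ`. -/
def cCrosses {V : Type*} {n : ℕ} (σ : V ≃ Fin n) (u v x y : V) : Prop :=
  (cycBtw (σ u) (σ x) (σ v) ∧ cycBtw (σ v) (σ y) (σ u)) ∨
  (cycBtw (σ u) (σ y) (σ v) ∧ cycBtw (σ v) (σ x) (σ u))

/-- A family of circular orderings is pairwise suitable for `G`: every pair of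
non-adjacent edges is separated in at least one ordering of the family. -/
def IsCircSepFamily {V : Type*} {n k : ℕ} (G : SimpleGraph V) (F : Fin k → (V ≃ Fin n)) : Prop :=
  ∀ u v x y : V, G.Adj u v → G.Adj x y → u ≠ x → u ≠ y → v ≠ x → v ≠ y →
    ∃ i, cSeparates (F i) u v x y

/-- The circular separation dimension `π°(G)`: the minimum number of circular orderings of the
vertex set such that every pair of non-adjacent edges is separated in at least one of them. -/
noncomputable def circSepDim {V : Type*} [Fintype V] (G : SimpleGraph V) : ℕ :=
  sInf {k | ∃ F : Fin k → (V ≃ Fin (Fintype.card V)), IsCircSepFamily G F}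

/-- `G` is outerplanar, encoded combinatorially: some circular placement of its vertices
(with edges drawn as chords) has no two disjoint edges crossing. -/
def IsOuterplanarOrdering {V : Type*} {n : ℕ} (G : SimpleGraph V) (σ : V ≃ Fin n) : Prop :=
  ∀ u v x y : V, G.Adj u v → G.Adj x y → u ≠ x → u ≠ y → v ≠ x → v ≠ y →
    ¬ cCrosses σ u v x y

lemma cycBtw_cross {n : ℕ} {a b c d : Fin n}
    (h1 : a < c) (h2 : c < b) (h3 : d < a ∨ b < d) :
    (cycBtw a c b ∧ cycBtw b d a) ∨ (cycBtw a d b ∧ cycBtw b c a) := by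
  simp only [cycBtw, Fin.lt_def] at *
  omega

lemma exists_adj_across' {W : Type*} {H : SimpleGraph W} {S : Set W} :
    ∀ {x y : W}, H.Walk x y → x ∈ S → y ∉ S → ∃ a b, a ∈ S ∧ b ∉ S ∧ H.Adj a b
  | x, _, .nil, hx, hy => absurd hx hy
  | x, y, .cons (v := z) h p, hx, hy => by
    by_cases hz : z ∈ S
    · exact exists_adj_across' p hz hy
    · exact ⟨x, z, hx, hz, h⟩

lemma exists_adj_across_avoid {W : Type*} {H : SimpleGraph W}
    {w : W} (hc : (H.induce {u | u ≠ w}).Connected) {S : Set W}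
    {x y : W} (hx : x ∈ S) (hxw : x ≠ w) (hy : y ∉ S) (hyw : y ≠ w) :
    ∃ a b, a ∈ S ∧ a ≠ w ∧ b ∉ S ∧ b ≠ w ∧ H.Adj a b := by
  obtain ⟨p⟩ := hc.preconnected ⟨x, hxw⟩ ⟨y, hyw⟩
  obtain ⟨a, b, ha, hb, hab⟩ :=
    exists_adj_across' (S := {z : {u | u ≠ w} | (z : W) ∈ S}) p hx hy
  exact ⟨a, b, ha, a.2, hb, b.2, hab⟩

def pathDown {V : Type*} (G : SimpleGraph V) (f : ℕ → V) :
    (k : ℕ) → (∀ j, j < k → G.Adj (f (j+1)) (f j)) → G.Walk (f k) (f 0)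
  | 0, _ => .nil
  | k+1, h => .cons (h k (by omega)) (pathDown G f k (fun j hj => h j (by omega)))

lemma pathDown_support {V : Type*} (G : SimpleGraph V) (f : ℕ → V) :
    ∀ (k : ℕ) (h : ∀ j, j < k → G.Adj (f (j+1)) (f j)),
      (pathDown G f k h).support = ((List.range (k+1)).map f).reverse
  | 0, _ => by simp [pathDown, List.range_succ]
  | k+1, h => by
    rw [pathDown, SimpleGraph.Walk.support_cons, pathDown_support G f k]
    rw [List.range_succ (n := k+1)]
    simp

lemma pathDown_edges {V : Type*} (G : SimpleGraph V) (f : ℕ → V) :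
    ∀ (k : ℕ) (h : ∀ j, j < k → G.Adj (f (j+1)) (f j)),
      ∀ e ∈ (pathDown G f k h).edges, ∃ j, j < k ∧ e = s(f (j+1), f j)
  | 0, _ => by simp [pathDown]
  | k+1, h => by
    rw [pathDown, SimpleGraph.Walk.edges_cons]
    intro e he
    rcases List.mem_cons.1 he with rfl | he
    · exact ⟨k, by omega, rfl⟩
    · obtain ⟨j, hj, hej⟩ := pathDown_edges G f k _ e he
      exact ⟨j, by omega, hej⟩


/-- Every biconnected outerplanar graph on at least `3` vertices is Hamiltonian; indeed the
boundary of the outer face (a non-crossing circular placement in which cyclically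
consecutive vertices are adjacent) forms a Hamiltonian cycle. -/
theorem biconnected_outerplanar_hamiltonian {V : Type*} [Fintype V] [DecidableEq V]
    (G : SimpleGraph V) (hcard : 3 ≤ Fintype.card V) (hconn : G.Connected)
    (hcut : ∀ v : V, (G.induce {u | u ≠ v}).Connected)
    (houter : ∃ σ : V ≃ Fin (Fintype.card V), IsOuterplanarOrdering G σ) :
    G.IsHamiltonian ∧ ∃ σ : V ≃ Fin (Fintype.card V), IsOuterplanarOrdering G σ ∧
      ∀ u v : V, ((σ v : ℕ) = ((σ u : ℕ) + 1) % Fintype.card V) → G.Adj u v := by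
  classical
  set n := Fintype.card V with hn
  obtain ⟨σ, hσ⟩ := houter
  have hn0 : 0 < n := by omega
  let q : V → ℕ := fun v => (σ v).val
  have hqlt : ∀ v, q v < n := fun v => (σ v).isLt
  let r : ℕ → V := fun j => σ.symm ⟨j % n, Nat.mod_lt _ hn0⟩
  have hqr : ∀ j, j < n → q (r j) = j := by
    intro j hj
    show ((σ (σ.symm ⟨j % n, Nat.mod_lt _ hn0⟩) : Fin n) : ℕ) = j
    rw [Equiv.apply_symm_apply]
    exact Nat.mod_eq_of_lt hj
  have hrq : ∀ v, r (q v) = v := by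
    intro v
    show σ.symm ⟨(σ v : ℕ) % n, Nat.mod_lt _ hn0⟩ = v
    rw [show (⟨(σ v : ℕ) % n, Nat.mod_lt _ hn0⟩ : Fin n) = σ v from
      Fin.ext (Nat.mod_eq_of_lt (σ v).isLt), Equiv.symm_apply_apply]
  have hqinj : ∀ {u v : V}, q u = q v → u = v := by
    intro u v h
    have := congrArg r h
    rwa [hrq, hrq] at this
  -- no two disjoint chords alternate
  have noCross : ∀ u v x y : V, G.Adj u v → G.Adj x y →
      q u < q x → q x < q v → (q y < q u ∨ q v < q y) → False := by
    intro u v x y huv hxy h1 h2 h3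
    have hux : u ≠ x := by rintro rfl; omega
    have huy : u ≠ y := by rintro rfl; omega
    have hvx : v ≠ x := by rintro rfl; omega
    have hvy : v ≠ y := by rintro rfl; omega
    exact hσ u v x y huv hxy hux huy hvx hvy
      (cycBtw_cross (show (σ u : ℕ) < (σ x : ℕ) from h1) (show (σ x : ℕ) < (σ v : ℕ) from h2)
        (h3.imp (fun h => show (σ y : ℕ) < (σ u : ℕ) from h)
          (fun h => show (σ v : ℕ) < (σ y : ℕ) from h)))
  have edgeG : ∀ S : Set V, (∃ x, x ∈ S) → (∃ y, y ∉ S) →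
      ∃ a b, a ∈ S ∧ b ∉ S ∧ G.Adj a b := by
    rintro S ⟨x, hx⟩ ⟨y, hy⟩
    obtain ⟨p⟩ := hconn.preconnected x y
    exact exists_adj_across' p hx hy
  -- every gap below a chord is an edge
  have span : ∀ k : ℕ, ∀ u v : V, G.Adj u v → q u < q v → q v - q u ≤ k →
      ∀ j, q u ≤ j → j + 1 ≤ q v → G.Adj (r j) (r (j+1)) := by
    intro k
    induction k with
    | zero => intro u v _ h1 h2 j _ _; omega
    | succ k ih =>
      intro u v huv h1 h2 j hj1 hj2
      by_cases h2' : q v = q u + 1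
      · have hju : j = q u := by omega
        have e1 : r j = u := by rw [hju, hrq]
        have e2 : r (j+1) = v := by rw [hju, ← h2', hrq]
        rw [e1, e2]; exact huv
      · have hint : q u + 1 < q v := by omega
        by_cases hja : j = q u
        · subst hja
          have hxmem : r (q u + 1) ∈ {z : V | q u < q z ∧ q z < q v} := by
            have := hqr (q u + 1) (by have := hqlt v; omega)
            simp only [Set.mem_setOf_eq, this]
            omega
          have hxne : r (q u + 1) ≠ v := by
            intro h
            have := congrArg q h
            rw [hqr (q u + 1) (by have := hqlt v; omega)] at this
            omega
          have hymem : u ∉ {z : V | q u < q z ∧ q z < q v} := by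
            simp only [Set.mem_setOf_eq]; omega
          obtain ⟨x, y, hxS, hxv, hyS, hyv, hxy⟩ :=
            exists_adj_across_avoid (hcut v) hxmem hxne hymem (G.ne_of_adj huv)
          have hx1 : q u < q x := hxS.1
          have hx2 : q x < q v := hxS.2
          have hy1 : ¬(q u < q y ∧ q y < q v) := hyS
          have hy2 : q y ≠ q v := fun h => hyv (hqinj h)
          rcases lt_trichotomy (q y) (q u) with hlt | heq | hgt
          · exact (noCross u v x y huv hxy hx1 hx2 (Or.inl hlt)).elim
          · have hyu' : y = u := hqinj heq
            rw [hyu'] at hxy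
            exact ih u x hxy.symm hx1 (by omega) (q u) le_rfl (by omega)
          · have : q v < q y := by omega
            exact (noCross u v x y huv hxy hx1 hx2 (Or.inr this)).elim
        · have hja' : q u < j := by omega
          have hxmem : r (q u + 1) ∈ {z : V | q u < q z ∧ q z ≤ j} := by
            have := hqr (q u + 1) (by have := hqlt v; omega)
            simp only [Set.mem_setOf_eq, this]
            omega
          have hxne : r (q u + 1) ≠ u := by
            intro h
            have := congrArg q h
            rw [hqr (q u + 1) (by have := hqlt v; omega)] at this
            omega
          have hymem : v ∉ {z : V | q u < q z ∧ q z ≤ j} := by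
            simp only [Set.mem_setOf_eq]; omega
          obtain ⟨x, y, hxS, hxu, hyS, hyu, hxy⟩ :=
            exists_adj_across_avoid (hcut u) hxmem hxne hymem (G.ne_of_adj huv).symm
          have hx1 : q u < q x := hxS.1
          have hx2 : q x ≤ j := hxS.2
          have hy1 : ¬(q u < q y ∧ q y ≤ j) := hyS
          have hy2 : q y ≠ q u := fun h => hyu (hqinj h)
          rcases (by omega : q y < q u ∨ j < q y) with hlt | hgt
          · exact (noCross u v x y huv hxy hx1 (by omega) (Or.inl hlt)).elim
          · rcases lt_trichotomy (q y) (q v) with hlt' | heq' | hgt'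
            · exact ih x y hxy (by omega) (by omega) j hx2 (by omega)
            · have hyv' : y = v := hqinj heq'
              rw [hyv'] at hxy heq'
              exact ih x v hxy (by omega) (by omega) j hx2 (by omega)
            · exact (noCross u v x y huv hxy hx1 (by omega) (Or.inr hgt')).elim
  -- consecutive positions are adjacent
  have consec : ∀ i, i + 1 < n → G.Adj (r i) (r (i+1)) := by
    intro i hi
    obtain ⟨x, y, hxS, hyS, hxy⟩ := edgeG {z | q z ≤ i}
      ⟨r 0, by simp only [Set.mem_setOf_eq, hqr 0 hn0]; omega⟩
      ⟨r (i+1), by simp only [Set.mem_setOf_eq, hqr (i+1) hi]; omega⟩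
    have hx1 : q x ≤ i := hxS
    have hy1 : ¬ q y ≤ i := hyS
    exact span n x y hxy (by omega) (by have := hqlt y; omega) i hx1 (by omega)
  -- the wrap-around edge
  have wrap : G.Adj (r (n-1)) (r 0) := by
    have hr1ne : r 1 ∉ {z : V | z = r 0} := by
      simp only [Set.mem_setOf_eq]
      intro h
      have := congrArg q h
      rw [hqr 1 (by omega), hqr 0 hn0] at this
      omega
    obtain ⟨x0, y0, hx0, hy0, hxy0⟩ := edgeG {z | z = r 0} ⟨r 0, rfl⟩ ⟨r 1, hr1ne⟩
    have hadj0 : ∃ w, G.Adj (r 0) w := ⟨y0, by rwa [← hx0]⟩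
    obtain ⟨w0, hw0F, hw0max⟩ := Finset.exists_max_image
      (Finset.univ.filter (fun w => G.Adj (r 0) w)) q
      (by obtain ⟨w, hw⟩ := hadj0; exact ⟨w, Finset.mem_filter.mpr ⟨Finset.mem_univ _, hw⟩⟩)
    have hadjw0 : G.Adj (r 0) w0 := (Finset.mem_filter.mp hw0F).2
    have hmax : ∀ w, G.Adj (r 0) w → q w ≤ q w0 := fun w hw =>
      hw0max w (Finset.mem_filter.mpr ⟨Finset.mem_univ _, hw⟩)
    have hm1 : 1 ≤ q w0 := by
      rcases Nat.eq_zero_or_pos (q w0) with h | h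
      · exact absurd (hqinj (by rw [h, hqr 0 hn0])) (G.ne_of_adj hadjw0).symm
      · omega
    by_cases hm : q w0 = n - 1
    · have : w0 = r (n-1) := by rw [← hm, hrq]
      rw [← this]; exact hadjw0.symm
    · exfalso
      have hmlt : q w0 < n - 1 := by have := hqlt w0; omega
      have hxmem : r 0 ∈ {z : V | q z < q w0} := by
        simp only [Set.mem_setOf_eq, hqr 0 hn0]; omega
      have hxne : r 0 ≠ w0 := G.ne_of_adj hadjw0
      have hymem : r (n-1) ∉ {z : V | q z < q w0} := by
        simp only [Set.mem_setOf_eq, hqr (n-1) (by omega)]; omega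
      have hyne : r (n-1) ≠ w0 := by
        intro h
        have := congrArg q h
        rw [hqr (n-1) (by omega)] at this
        omega
      obtain ⟨x, y, hxS, hxw, hyS, hyw, hxy⟩ :=
        exists_adj_across_avoid (hcut w0) hxmem hxne hymem hyne
      have hx1 : q x < q w0 := hxS
      have hy1 : ¬ q y < q w0 := hyS
      have hy2 : q y ≠ q w0 := fun h => hyw (hqinj h)
      rcases Nat.eq_zero_or_pos (q x) with hx0' | hx0'
      · have : x = r 0 := hqinj (by rw [hx0', hqr 0 hn0])
        subst this
        have := hmax y hxy
        omega
      · refine noCross (r 0) w0 x y hadjw0 hxy ?_ hx1 (Or.inr (by omega))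
        rw [hqr 0 hn0]; omega
  -- build the Hamiltonian cycle
  have hstep : ∀ j, j < n - 1 → G.Adj (r (j+1)) (r j) :=
    fun j hj => (consec j (by omega)).symm
  let W : G.Walk (r (n-1)) (r 0) := pathDown G r (n-1) hstep
  have hWsupp : W.support = ((List.range n).map r).reverse := by
    have := pathDown_support G r (n-1) hstep
    rwa [show n - 1 + 1 = n from by omega] at this
  have hnodup : (((List.range n).map r).reverse).Nodup := by
    rw [List.nodup_reverse]
    refine List.Nodup.map_on ?_ List.nodup_range
    intro i hi j hj hij
    rw [List.mem_range] at hi hj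
    have := congrArg q hij
    rwa [hqr i hi, hqr j hj] at this
  have hWpath : W.IsPath := SimpleGraph.Walk.IsPath.mk' (by rw [hWsupp]; exact hnodup)
  have hWedge : s(r 0, r (n-1)) ∉ W.edges := by
    intro h
    obtain ⟨j, hj, hej⟩ := pathDown_edges G r (n-1) hstep _ h
    rw [Sym2.eq_iff] at hej
    rcases hej with ⟨h1, h2⟩ | ⟨h1, h2⟩
    · have := congrArg q h1
      rw [hqr 0 hn0, hqr (j+1) (by omega)] at this
      omega
    · have e1 := congrArg q h1
      rw [hqr 0 hn0, hqr j (by omega)] at e1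
      have e2 := congrArg q h2
      rw [hqr (n-1) (by omega), hqr (j+1) (by omega)] at e2
      omega
  let c : G.Walk (r 0) (r 0) := SimpleGraph.Walk.cons wrap.symm W
  have hcyc : c.IsCycle := by
    rw [show c = SimpleGraph.Walk.cons wrap.symm W from rfl,
      SimpleGraph.Walk.cons_isCycle_iff]
    exact ⟨hWpath, hWedge⟩
  have hham : c.IsHamiltonianCycle := by
    rw [SimpleGraph.Walk.isHamiltonianCycle_iff_isCycle_and_support_count_tail_eq_one]
    refine ⟨hcyc, fun a => ?_⟩
    have : c.support = r 0 :: W.support := SimpleGraph.Walk.support_cons _ _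
    rw [this, List.tail_cons, hWsupp]
    refine List.count_eq_one_of_mem hnodup ?_
    rw [List.mem_reverse, List.mem_map]
    exact ⟨q a, List.mem_range.mpr (hqlt a), hrq a⟩
  refine ⟨fun _ => ⟨r 0, c, hham⟩, σ, hσ, ?_⟩
  intro u v h
  have h' : q v = (q u + 1) % n := h
  by_cases hu : q u + 1 = n
  · have hv0 : q v = 0 := by rw [h', hu, Nat.mod_self]
    have hv : v = r 0 := hqinj (by rw [hv0, hqr 0 hn0])
    have hu' : u = r (n-1) := hqinj (by rw [hqr (n-1) (by omega)]; omega)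
    rw [hv, hu']; exact wrap
  · have hlt : q u + 1 < n := by have := hqlt u; omega
    have hv : q v = q u + 1 := by rw [h', Nat.mod_eq_of_lt hlt]
    have e1 : u = r (q u) := (hrq u).symm
    have e2 : v = r (q u + 1) := by
      rw [← hv]; exact (hrq v).symm
    rw [e1, e2]; exact consec (q u) hlt
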